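/- Let N be an n × m real matrix and suppose there exists ω ∈ ℝⁿ with all coordinates strictly positive such that ωᵀN = 0 (a strictly positive conservation law). Let σ : ℝ≥0 → ℝ≥0ⁿ be differentiable with σ'(t) = N·r(σ(t)) for some continuous r : ℝ≥0ⁿ → ℝ≥0^m. If no point of the ω-limit set of σ lies on the boundary ∂ℝ≥0ⁿ, then liminf_{t→∞} σ_i(t) > 0 for every coordinate i. (This is Proposition 2(ii): a conservative, bounded-persistent reaction network is persistent.) -/

import Mathlib

open Filter Topology

/-- Proposition 2(ii): a conservative, bounded-persistent reaction network is
persistent.  If `N` admits a strictly positive conservation law `ω` (`ωᵀN = 0`)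
and `σ` is a nonnegative solution of `σ' = N r(σ)` for a continuous
nonnegative rate function `r`, and no point of the ω-limit set of `σ` lies on
the boundary of the nonnegative orthant, then `liminf_{t→∞} σ_i(t) > 0` for
every coordinate `i`. -/
theorem conservative_bounded_persistent_implies_persistent {n m : ℕ}
    (N : Matrix (Fin n) (Fin m) ℝ)
    (ω : Fin n → ℝ) (hω : ∀ i, 0 < ω i) (hconsv : Matrix.vecMul ω N = 0)
    (r : (Fin n → ℝ) → Fin m → ℝ) (hr : Continuous r)
    (hrnonneg : ∀ s : Fin n → ℝ, (∀ i, 0 ≤ s i) → ∀ j, 0 ≤ r s j)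
    (σ : ℝ → Fin n → ℝ)
    (hnonneg : ∀ t : ℝ, 0 ≤ t → ∀ i, 0 ≤ σ t i)
    (hode : ∀ t : ℝ, 0 ≤ t → HasDerivAt σ (N.mulVec (r (σ t))) t)
    (homega : ∀ s : Fin n → ℝ, ∀ tk : ℕ → ℝ,
      Filter.Tendsto tk Filter.atTop Filter.atTop →
      Filter.Tendsto (fun k => σ (tk k)) Filter.atTop (nhds s) →
      ∀ i, 0 < s i) :
    ∀ i, 0 < Filter.liminf (fun t => σ t i) Filter.atTop := by
  -- the conserved quantity f t = ω ⬝ᵥ σ t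
  set f : ℝ → ℝ := fun t => Finset.univ.sum (fun i => ω i * σ t i) with hf
  have hfderiv : ∀ t : ℝ, 0 ≤ t → HasDerivAt f 0 t := by
    intro t ht
    have hcoord : ∀ i, HasDerivAt (fun s => σ s i) (N.mulVec (r (σ t)) i) t :=
      fun i => hasDerivAt_pi.1 (hode t ht) i
    have hsum : HasDerivAt f (Finset.univ.sum
        (fun i => ω i * N.mulVec (r (σ t)) i)) t :=
      HasDerivAt.fun_sum (fun i _ => (hcoord i).const_mul (ω i))
    have : Finset.univ.sum (fun i => ω i * N.mulVec (r (σ t)) i) = 0 := by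
      have := Matrix.dotProduct_mulVec ω N (r (σ t))
      simpa [dotProduct, hconsv] using this
    rwa [this] at hsum
  -- f is constant on [0, ∞)
  have hfconst : ∀ t : ℝ, 0 ≤ t → f t = f 0 := by
    intro t ht
    have hcont : ContinuousOn f (Set.Icc 0 t) := fun x hx =>
      ((hfderiv x hx.1).continuousAt).continuousWithinAt
    have := constant_of_has_deriv_right_zero hcont (fun x hx =>
      ((hfderiv x hx.1).hasDerivWithinAt))
    exact this t (Set.mem_Icc.2 ⟨ht, le_rfl⟩)
  have hf0 : 0 ≤ f 0 := Finset.sum_nonneg fun i _ =>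
    mul_nonneg (hω i).le (hnonneg 0 le_rfl i)
  -- coordinatewise bound
  have hbound : ∀ t : ℝ, 0 ≤ t → ∀ i, σ t i ≤ f 0 / ω i := by
    intro t ht i
    have hle : ω i * σ t i ≤ f t :=
      Finset.single_le_sum (fun j _ => mul_nonneg (hω j).le (hnonneg t ht j))
        (Finset.mem_univ i)
    rw [hfconst t ht] at hle
    rw [le_div_iff₀ (hω i)]
    linarith [hle]
  intro i
  by_contra hlt
  push_neg at hlt
  -- construct points where σ · i is small
  have hkey : ∀ k : ℕ, ∃ t : ℝ, (k : ℝ) ≤ t ∧ σ t i < 1 / (k + 1) := by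
    intro k
    by_contra hcon
    push_neg at hcon
    have hev : ∀ᶠ t in atTop, 1 / ((k : ℝ) + 1) ≤ σ t i :=
      eventually_atTop.2 ⟨(k : ℝ), fun t ht => hcon t ht⟩
    have hcb : IsCoboundedUnder (· ≥ ·) atTop (fun t => σ t i) := by
      exact isCoboundedUnder_ge_of_eventually_le atTop (x := f 0 / ω i)
        (eventually_atTop.2 ⟨0, fun t ht => hbound t ht i⟩)
    have := le_liminf_of_le hcb hev
    have hpos : (0:ℝ) < 1 / ((k : ℝ) + 1) := by positivity
    linarith
  choose tk htk1 htk2 using hkey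
  have htkpos : ∀ k, (0:ℝ) ≤ tk k := fun k =>
    le_trans (Nat.cast_nonneg k) (htk1 k)
  have htktop : Tendsto tk atTop atTop :=
    tendsto_atTop_mono htk1 tendsto_natCast_atTop_atTop
  -- σ (tk k) i → 0
  have hto0 : Tendsto (fun k => σ (tk k) i) atTop (𝓝 0) := by
    have h1 : Tendsto (fun k : ℕ => 1 / ((k : ℝ) + 1)) atTop (𝓝 0) :=
      tendsto_one_div_add_atTop_nhds_zero_nat
    refine squeeze_zero (fun k => hnonneg (tk k) (htkpos k) i)
      (fun k => (htk2 k).le) h1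
  -- boundedness and compactness
  set B : ℝ := Finset.univ.sup' ⟨i, Finset.mem_univ i⟩ (fun j => f 0 / ω j)
    with hB
  have hBnn : 0 ≤ B := le_trans (div_nonneg hf0 (hω i).le)
    (Finset.le_sup' (fun j => f 0 / ω j) (Finset.mem_univ i))
  have hmem : ∀ k, σ (tk k) ∈ Metric.closedBall (0 : Fin n → ℝ) B := by
    intro k
    rw [Metric.mem_closedBall, dist_zero_right]
    refine (pi_norm_le_iff_of_nonneg hBnn).2 (fun j => ?_)
    rw [Real.norm_eq_abs, abs_of_nonneg (hnonneg _ (htkpos k) j)]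
    exact le_trans (hbound _ (htkpos k) j) (Finset.le_sup' (fun j => f 0 / ω j) (Finset.mem_univ j))
  obtain ⟨a, -, φ, hφ, hconv⟩ := tendsto_subseq_of_bounded
    Metric.isBounded_closedBall hmem
  have htkφ : Tendsto (fun k => tk (φ k)) atTop atTop :=
    htktop.comp hφ.tendsto_atTop
  have hai : 0 < a i := homega a (fun k => tk (φ k)) htkφ hconv i
  have h1 : Tendsto (fun k => σ (tk (φ k)) i) atTop (𝓝 (a i)) :=
    ((continuous_apply i).tendsto a).comp hconv
  have h2 : Tendsto (fun k => σ (tk (φ k)) i) atTop (𝓝 0) :=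
    hto0.comp hφ.tendsto_atTop
  have : a i = 0 := tendsto_nhds_unique h1 h2
  linarith
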